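/- Suppose g and ḡ are two differentiable curves on a matrix Lie group G both satisfying ẋ = ξ(t)x + X̃_t(x) + xζ(t), where X̃_t satisfies the cocycle property X̃_t(hg) = h X̃_t(g) + X̃_t(h) g. Then the left-invariant error f = g⁻¹ḡ satisfies the autonomous equation ḟ = X̃_t(f) + fζ(t) − ζ(t)f, which does not involve ξ, g, or ḡ. -/

import Mathlib

open Matrix

attribute [local instance] Matrix.linftyOpNormedRing Matrix.linftyOpNormedAlgebra

/-- If `g` and `ḡ` both satisfy `ẋ = ξ(t) x + X̃_t(x) + x ζ(t)` with `X̃` satisfying the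
cocycle property, then the left-invariant error `f = g⁻¹ ḡ` satisfies the autonomous
equation `ḟ = X̃_t(f) + f ζ(t) − ζ(t) f`. -/
theorem left_error_autonomous (n : ℕ) (G : Set (Matrix (Fin n) (Fin n) ℝ))
    (hone : (1 : Matrix (Fin n) (Fin n) ℝ) ∈ G)
    (hmul : ∀ a ∈ G, ∀ b ∈ G, a * b ∈ G)
    (hinv : ∀ a ∈ G, a⁻¹ ∈ G)
    (Xt : ℝ → Matrix (Fin n) (Fin n) ℝ → Matrix (Fin n) (Fin n) ℝ)
    (ξ ζ : ℝ → Matrix (Fin n) (Fin n) ℝ)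
    (hcoc : ∀ t, ∀ g ∈ G, ∀ h ∈ G, Xt t (h * g) = h * Xt t g + Xt t h * g)
    (g gbar : ℝ → Matrix (Fin n) (Fin n) ℝ)
    (hgG : ∀ t, g t ∈ G) (hgbarG : ∀ t, gbar t ∈ G)
    (hunit : ∀ t, IsUnit (g t))
    (hdg : ∀ t, HasDerivAt g (ξ t * g t + Xt t (g t) + g t * ζ t) t)
    (hdgbar : ∀ t, HasDerivAt gbar (ξ t * gbar t + Xt t (gbar t) + gbar t * ζ t) t) :
    ∀ t, HasDerivAt (fun s => (g s)⁻¹ * gbar s)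
      (Xt t ((g t)⁻¹ * gbar t) + ((g t)⁻¹ * gbar t) * ζ t
        - ζ t * ((g t)⁻¹ * gbar t)) t := by
  intro t
  set u := g t with hu
  set v := gbar t with hv
  obtain ⟨w, hw⟩ := hunit t
  have hinv_eq : ∀ s, (g s)⁻¹ = Ring.inverse (g s) := fun s =>
    (Matrix.nonsing_inv_eq_ringInverse (g s))
  have hwinv : (↑w⁻¹ : Matrix (Fin n) (Fin n) ℝ) = u⁻¹ := by
    rw [Matrix.coe_units_inv, hw]
  -- derivative of s ↦ (g s)⁻¹
  have hdi : HasDerivAt (fun s => (g s)⁻¹)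
      (-(u⁻¹ * (ξ t * u + Xt t u + u * ζ t) * u⁻¹)) t := by
    have := (hw ▸ hasFDerivAt_ringInverse (𝕜 := ℝ) w).comp_hasDerivAt t (hdg t)
    have h2 : HasDerivAt (fun s => Ring.inverse (g s))
        (-(ContinuousLinearMap.mulLeftRight ℝ _ ↑w⁻¹ ↑w⁻¹) (ξ t * u + Xt t u + u * ζ t)) t := this
    rw [ContinuousLinearMap.mulLeftRight_apply, hwinv] at h2
    simpa only [← hinv_eq, neg_neg] using (show HasDerivAt (- -fun s => Ring.inverse (g s)) _ t from h2.neg.neg)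
  have hd := hdi.mul (hdgbar t)
  have hul : u⁻¹ * u = 1 := Matrix.nonsing_inv_mul u ((Matrix.isUnit_iff_isUnit_det u).mp ⟨w, hw⟩)
  have huG : u ∈ G := hgG t
  have hfG : u⁻¹ * v ∈ G := hmul _ (hinv _ huG) _ (hgbarG t)
  have hcoc' := hcoc t (u⁻¹ * v) hfG u huG
  have hvW : u * (u⁻¹ * v) = v := by rw [← mul_assoc, Matrix.mul_nonsing_inv u
    ((Matrix.isUnit_iff_isUnit_det u).mp ⟨w, hw⟩), one_mul]
  rw [hvW] at hcoc'
  have hur : u * u⁻¹ = 1 := Matrix.mul_nonsing_inv u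
    ((Matrix.isUnit_iff_isUnit_det u).mp ⟨w, hw⟩)
  have hXv : u⁻¹ * Xt t v = Xt t (u⁻¹ * v) + u⁻¹ * (Xt t u * (u⁻¹ * v)) := by
    rw [hcoc', mul_add, ← mul_assoc, hul, one_mul]
  have e1 : u⁻¹ * (ξ t * u + Xt t u + u * ζ t) * u⁻¹ * v
      = u⁻¹ * ξ t * v + u⁻¹ * Xt t u * (u⁻¹ * v) + ζ t * (u⁻¹ * v) := by
    have h1 : u⁻¹ * (ξ t * u + Xt t u + u * ζ t) * u⁻¹ * v
        = u⁻¹ * ξ t * (u * u⁻¹) * v + u⁻¹ * Xt t u * (u⁻¹ * v)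
          + (u⁻¹ * u) * ζ t * (u⁻¹ * v) := by noncomm_ring
    rw [h1, hur, hul]; noncomm_ring
  have e2 : u⁻¹ * (ξ t * v + Xt t v + v * ζ t)
      = u⁻¹ * ξ t * v + (Xt t (u⁻¹ * v) + u⁻¹ * (Xt t u * (u⁻¹ * v)))
        + (u⁻¹ * v) * ζ t := by
    rw [mul_add, mul_add, ← mul_assoc u⁻¹ v (ζ t), hXv]; noncomm_ring
  convert (show HasDerivAt (fun s => (g s)⁻¹ * gbar s) _ t from hd) using 1
  rw [neg_mul, e1, e2]
  noncomm_ring
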